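/- If a chord diagram contains a trigon of type A, then its reductivity is at most 2. (Paper's Lemma 2.3: if a spherical curve P has a trigon of type A, then r(P) ≤ 2.) -/

import Mathlib

set_option maxHeartbeats 1000000


/-!
Chord diagrams modeling spherical curves (Gauss diagrams).

A chord diagram with `n` chords is a fixed-point-free involution `f` on the
cyclically ordered set `ZMod (2*n)`; the unordered pairs `{a, f a}` are its chords.
-/

namespace SphericalCurveReductivity

/-- `x` lies in the open arc from `a` to `b` (in the positive cyclic direction). -/
def InArc {N : ℕ} (a b x : ZMod N) : Prop :=
  0 < (x - a).val ∧ (x - a).val < (b - a).val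

/-- The chord `{a, f a}` crosses the chord `{c, f c}`: the four endpoints are pairwise
distinct and exactly one of `c`, `f c` lies in the open arc from `a` to `f a`. -/
def Crosses {N : ℕ} (f : ZMod N → ZMod N) (a c : ZMod N) : Prop :=
  c ≠ a ∧ c ≠ f a ∧ f c ≠ a ∧ f c ≠ f a ∧
    Xor' (InArc a (f a) c) (InArc a (f a) (f c))

/-- A chord diagram is reducible if some chord crosses no other chord. -/
def Reducible {N : ℕ} (f : ZMod N → ZMod N) : Prop :=
  ∃ a, ∀ c, ¬ Crosses f a c

/-- The embedding of the points of the new chord diagram (after the I-move at the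
chord `{a, b}`) into the old one: the points `a`, `b` are deleted and the points of
the open arc from `a` to `b` appear in reversed order, followed by the points of the
open arc from `b` to `a` in their original order. -/
def imoveEmb (n : ℕ) (a b : ZMod (2 * n)) (k : ZMod (2 * (n - 1))) : ZMod (2 * n) :=
  if k.val + 1 < (b - a).val then a + (((b - a).val - 1 - k.val : ℕ) : ZMod (2 * n))
  else a + ((k.val + 2 : ℕ) : ZMod (2 * n))

/-- The induced map of points of the old chord diagram (other than `a`, `b`) to points
of the new chord diagram after the I-move at the chord `{a, b}`; inverse to `imoveEmb`. -/
def imoveProj (n : ℕ) (a b : ZMod (2 * n)) (x : ZMod (2 * n)) : ZMod (2 * (n - 1)) :=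
  if (x - a).val < (b - a).val then (((b - a).val - 1 - (x - a).val : ℕ) : ZMod (2 * (n - 1)))
  else (((x - a).val - 2 : ℕ) : ZMod (2 * (n - 1)))

/-- The I-move (inverse-half-twisted splice) at the chord `{a, f a}`: delete the two
points `a`, `f a` and reverse the order of the points along the open arc from `a`
to `f a`, producing a chord diagram with `n - 1` chords. -/
def IMove {n : ℕ} (f : ZMod (2 * n) → ZMod (2 * n)) (a : ZMod (2 * n))
    (k : ZMod (2 * (n - 1))) : ZMod (2 * (n - 1)) :=
  imoveProj n a (f a) (f (imoveEmb n a (f a) k))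

/-- `ReductivityLe m f` : the reductivity of the chord diagram `f` is at most `m`,
i.e. at most `m` successive I-moves transform `f` into a reducible chord diagram. -/
def ReductivityLe : ℕ → ∀ {n : ℕ}, (ZMod (2 * n) → ZMod (2 * n)) → Prop
  | 0, _, f => Reducible f
  | m + 1, n, f => Reducible f ∨ ∃ a : ZMod (2 * n), ReductivityLe m (IMove f a)

/-- An incoherent bigon: the two chords `{i, j}` and `{i+1, j+1}` with the four
endpoints pairwise distinct. -/
def IncoherentBigon {N : ℕ} (f : ZMod N → ZMod N) (i j : ZMod N) : Prop :=
  f i = j ∧ f (i + 1) = j + 1 ∧ ({i, j, i + 1, j + 1} : Finset (ZMod N)).card = 4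

/-- A coherent bigon: the two chords `{i, j+1}` and `{i+1, j}` with the four
endpoints pairwise distinct. -/
def CoherentBigon {N : ℕ} (f : ZMod N → ZMod N) (i j : ZMod N) : Prop :=
  f i = j + 1 ∧ f (i + 1) = j ∧ ({i, j, i + 1, j + 1} : Finset (ZMod N)).card = 4

/-- The six endpoints of a trigon with corners at the consecutive pairs
`(i, i+1)`, `(j, j+1)`, `(k, k+1)`. -/
def trigonSet {N : ℕ} (i j k : ZMod N) : Finset (ZMod N) :=
  {i, i + 1, j, j + 1, k, k + 1}

/-- A trigon: three chords whose six endpoints form the three pairs of cyclically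
consecutive points `(i, i+1)`, `(j, j+1)`, `(k, k+1)` (pairwise distinct), such that no
chord joins the two points of one of these pairs, so that the three chords connect the
three consecutive pairs in a triangle. -/
def Trigon {N : ℕ} (f : ZMod N → ZMod N) (i j k : ZMod N) : Prop :=
  (trigonSet i j k).card = 6 ∧
  (∀ x ∈ trigonSet i j k, f x ∈ trigonSet i j k) ∧
  f i ≠ i + 1 ∧ f j ≠ j + 1 ∧ f k ≠ k + 1

/-- A representative point of the third chord of a trigon (the chord not containing
`i` nor `i + 1`). -/
def trigonThird {N : ℕ} (f : ZMod N → ZMod N) (i j : ZMod N) : ZMod N :=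
  if j = f i ∨ j = f (i + 1) then j + 1 else j

/-- Exactly two of three propositions hold. -/
def ExactlyTwo (p q r : Prop) : Prop :=
  (p ∧ q ∧ ¬r) ∨ (p ∧ ¬q ∧ r) ∨ (¬p ∧ q ∧ r)

/-- Exactly one of three propositions holds. -/
def ExactlyOne (p q r : Prop) : Prop :=
  (p ∧ ¬q ∧ ¬r) ∨ (¬p ∧ q ∧ ¬r) ∨ (¬p ∧ ¬q ∧ r)

/-- Trigon of type A: exactly two of the three pairs of its chords cross. -/
def TrigonA {N : ℕ} (f : ZMod N → ZMod N) (i j k : ZMod N) : Prop :=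
  Trigon f i j k ∧
    ExactlyTwo (Crosses f i (i + 1)) (Crosses f i (trigonThird f i j))
      (Crosses f (i + 1) (trigonThird f i j))

/-- Trigon of type B: exactly one pair of its chords crosses. -/
def TrigonB {N : ℕ} (f : ZMod N → ZMod N) (i j k : ZMod N) : Prop :=
  Trigon f i j k ∧
    ExactlyOne (Crosses f i (i + 1)) (Crosses f i (trigonThird f i j))
      (Crosses f (i + 1) (trigonThird f i j))

/-- Trigon of type C: its three chords pairwise cross. -/
def TrigonC {N : ℕ} (f : ZMod N → ZMod N) (i j k : ZMod N) : Prop :=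
  Trigon f i j k ∧
    Crosses f i (i + 1) ∧ Crosses f i (trigonThird f i j) ∧
      Crosses f (i + 1) (trigonThird f i j)

/-- Trigon of type D: no two of its chords cross. -/
def TrigonD {N : ℕ} (f : ZMod N → ZMod N) (i j k : ZMod N) : Prop :=
  Trigon f i j k ∧
    ¬ Crosses f i (i + 1) ∧ ¬ Crosses f i (trigonThird f i j) ∧
      ¬ Crosses f (i + 1) (trigonThird f i j)

variable {N : ℕ}

lemma val_toZMod [NeZero N] (a : ZMod N) : ((a.val : ℕ) : ZMod N) = a := by
  rw [ZMod.natCast_val, ZMod.cast_id]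

lemma val_inj [NeZero N] {a b : ZMod N} (h : a.val = b.val) : a = b :=
  ZMod.val_injective N h

lemma eq_of_sub_val_eq [NeZero N] {o a b : ZMod N} (h : (a - o).val = (b - o).val) : a = b :=
  sub_left_injective (val_inj h)

lemma val_sub_of_le [NeZero N] {u w : ZMod N} (h : w.val ≤ u.val) :
    (u - w).val = u.val - w.val := by
  have h1 : u - w = ((u.val - w.val : ℕ) : ZMod N) := by
    have : ((u.val - w.val : ℕ) : ZMod N) = (u.val : ℕ) - (w.val : ℕ) := by
      push_cast [Nat.cast_sub h]; ring
    rw [this, val_toZMod, val_toZMod]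
  rw [h1, ZMod.val_cast_of_lt (lt_of_le_of_lt (Nat.sub_le _ _) (ZMod.val_lt u))]

lemma val_sub_of_lt [NeZero N] {u w : ZMod N} (h : u.val < w.val) :
    (u - w).val = u.val + N - w.val := by
  have hw : w.val < N := ZMod.val_lt w
  have h1 : u - w = ((u.val + N - w.val : ℕ) : ZMod N) := by
    have : ((u.val + N - w.val : ℕ) : ZMod N) = (u.val : ℕ) + (N : ℕ) - (w.val : ℕ) := by
      push_cast [Nat.cast_sub (by omega : w.val ≤ u.val + N)]; ring
    rw [this, val_toZMod, val_toZMod, ZMod.natCast_self, add_zero]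
  rw [h1, ZMod.val_cast_of_lt (by omega)]

lemma val_add_one [NeZero N] {a : ZMod N} (h : a.val + 1 < N) :
    (a + 1).val = a.val + 1 := by
  have h2 : a + 1 = ((a.val + 1 : ℕ) : ZMod N) := by push_cast [val_toZMod]; ring
  rw [h2, ZMod.val_cast_of_lt h]

lemma sub_eq_sub_sub (o a x : ZMod N) : x - a = (x - o) - (a - o) := by ring

lemma shift_le [NeZero N] {o a x : ZMod N} (h : (a - o).val ≤ (x - o).val) :
    (x - a).val = (x - o).val - (a - o).val := by
  rw [sub_eq_sub_sub o a x, val_sub_of_le h]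

lemma shift_lt [NeZero N] {o a x : ZMod N} (h : (x - o).val < (a - o).val) :
    (x - a).val = (x - o).val + N - (a - o).val := by
  rw [sub_eq_sub_sub o a x, val_sub_of_lt h]


lemma card4_le {α : Type*} [DecidableEq α] (a b c d : α) :
    ({a, b, c, d} : Finset α).card ≤ 4 := by
  apply le_trans (Finset.card_insert_le _ _)
  apply Nat.succ_le_succ
  apply le_trans (Finset.card_insert_le _ _)
  apply Nat.succ_le_succ
  apply le_trans (Finset.card_insert_le _ _)
  apply Nat.succ_le_succ
  exact (Finset.card_singleton _).le

lemma card5_le {α : Type*} [DecidableEq α] (a b c d e : α) :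
    ({a, b, c, d, e} : Finset α).card ≤ 5 := by
  apply le_trans (Finset.card_insert_le _ _)
  exact Nat.succ_le_succ (card4_le _ _ _ _)

lemma six_distinct {α : Type*} [DecidableEq α] {a b c d e g : α}
    (h : ({a, b, c, d, e, g} : Finset α).card = 6) :
    a ≠ b ∧ a ≠ c ∧ a ≠ d ∧ a ≠ e ∧ a ≠ g ∧ b ≠ c ∧ b ≠ d ∧ b ≠ e ∧ b ≠ g ∧
      c ≠ d ∧ c ≠ e ∧ c ≠ g ∧ d ≠ e ∧ d ≠ g ∧ e ≠ g := by
  have ha : a ∉ ({b, c, d, e, g} : Finset α) := by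
    intro hm
    rw [Finset.insert_eq_self.2 hm] at h
    have := card5_le b c d e g; omega
  rw [Finset.card_insert_of_notMem ha] at h
  have hb : b ∉ ({c, d, e, g} : Finset α) := by
    intro hm
    rw [Finset.insert_eq_self.2 hm] at h
    have := card4_le c d e g; omega
  rw [Finset.card_insert_of_notMem hb] at h
  have hc : c ∉ ({d, e, g} : Finset α) := by
    intro hm
    rw [Finset.insert_eq_self.2 hm] at h
    have h3 : ({d, e, g} : Finset α).card ≤ 3 := by
      apply le_trans (Finset.card_insert_le _ _)
      apply Nat.succ_le_succ
      apply le_trans (Finset.card_insert_le _ _)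
      exact Nat.succ_le_succ (Finset.card_singleton _).le
    omega
  rw [Finset.card_insert_of_notMem hc] at h
  have hd : d ∉ ({e, g} : Finset α) := by
    intro hm
    rw [Finset.insert_eq_self.2 hm] at h
    have h3 : ({e, g} : Finset α).card ≤ 2 := by
      apply le_trans (Finset.card_insert_le _ _)
      exact Nat.succ_le_succ (Finset.card_singleton _).le
    omega
  rw [Finset.card_insert_of_notMem hd] at h
  have he : e ∉ ({g} : Finset α) := by
    intro hm
    rw [Finset.insert_eq_self.2 hm] at h
    simp at h
  simp only [Finset.mem_insert, Finset.mem_singleton, not_or] at ha hb hc hd he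
  exact ⟨ha.1, ha.2.1, ha.2.2.1, ha.2.2.2.1, ha.2.2.2.2, hb.1, hb.2.1, hb.2.2.1, hb.2.2.2,
    hc.1, hc.2.1, hc.2.2, hd.1, hd.2, he⟩

section Bigon
variable {m : ℕ}

lemma bigon_reducible (hm : 2 ≤ m) (g : ZMod (2*m) → ZMod (2*m)) (a b : ZMod (2*m))
    (hga : g a = b) (hga1 : g (a+1) = b + 1) (h1 : b ≠ a) (h2 : b ≠ a + 1)
    (h3 : b + 1 ≠ a) : Reducible (IMove g a) := by
  haveI : NeZero (2*m) := ⟨by omega⟩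
  haveI : NeZero (2*(m-1)) := ⟨by omega⟩
  haveI hf1 : Fact (1 < 2*m) := ⟨by omega⟩
  haveI hf2 : Fact (1 < 2*(m-1)) := ⟨by omega⟩
  set d := (b - a).val with hd
  have hba : b - a = ((d : ℕ) : ZMod (2*m)) := (val_toZMod _).symm
  have hdlt : d < 2*m := ZMod.val_lt _
  have hd0 : d ≠ 0 := by
    intro h; rw [h] at hba; simp at hba; exact h1 (by rwa [sub_eq_zero] at hba)
  have hd1 : d ≠ 1 := by
    intro h; rw [h] at hba; push_cast at hba
    have : b = 1 + a := sub_eq_iff_eq_add.mp hba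
    exact h2 (by rw [this]; ring)
  have hd2 : d ≤ 2*m - 2 := by
    by_contra h
    have hdd : d = 2*m - 1 := by omega
    have hthis : b + 1 - a = ((d + 1 : ℕ) : ZMod (2*m)) := by
      push_cast; rw [← hba]; ring
    rw [hdd] at hthis
    have h2m : ((2*m - 1 + 1 : ℕ) : ZMod (2*m)) = 0 := by
      have : (2*m - 1 + 1 : ℕ) = 2*m := by omega
      rw [this, ZMod.natCast_self]
    rw [h2m] at hthis
    exact h3 (by rwa [sub_eq_zero] at hthis)
  set a0 : ZMod (2*(m-1)) := ((d - 2 : ℕ) : ZMod (2*(m-1))) with ha0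
  have ha0v : a0.val = d - 2 := ZMod.val_cast_of_lt (by omega)
  have hemb : imoveEmb m a b a0 = a + 1 := by
    rw [imoveEmb, if_pos (by rw [ha0v]; omega)]
    rw [ha0v]
    have h11 : ((b-a).val - 1 - (d - 2) : ℕ) = 1 := by rw [← hd]; omega
    rw [h11]; norm_num
  have hproj : imoveProj m a b (b + 1) = a0 + 1 := by
    have hb1 : (b + 1 - a).val = d + 1 := by
      have hh : b + 1 - a = (b - a) + 1 := by ring
      rw [hh, val_add_one (by rw [← hd]; omega), ← hd]
    rw [imoveProj, if_neg (by rw [hb1, ← hd]; omega), hb1]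
    have e1 : (d + 1 - 2 : ℕ) = (d - 2) + 1 := by omega
    rw [e1]; push_cast; rw [ha0]
  have key : IMove g a a0 = a0 + 1 := by
    rw [IMove, hga, hemb, hga1, hproj]
  refine ⟨a0, fun c hcr => ?_⟩
  obtain ⟨-, -, -, -, hx⟩ := hcr
  rw [key] at hx
  have harc : ∀ u : ZMod (2*(m-1)), ¬ InArc a0 (a0 + 1) u := by
    intro u hu
    obtain ⟨hu1, hu2⟩ := hu
    rw [add_sub_cancel_left, ZMod.val_one] at hu2
    omega
  rcases hx with ⟨h, -⟩ | ⟨h, -⟩ <;> exact harc _ h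

end Bigon

section Core

lemma core_lemma {n : ℕ} (hn : 3 ≤ n) (f : ZMod (2*n) → ZMod (2*n))
    (hinv : Function.Involutive f) (x y z : ZMod (2*n))
    (hfx : f x = z) (hfx1 : f (x+1) = y+1) (hfy : f y = z+1)
    (hP : 2 ≤ (y-x).val) (hPQ : (y-x).val + 2 ≤ (z-x).val)
    (hQN : (z-x).val + 2 ≤ 2*n) :
    ReductivityLe 2 f := by
  haveI : NeZero (2*n) := ⟨by omega⟩
  haveI : NeZero (2*(n-1)) := ⟨by omega⟩
  haveI : Fact (1 < 2*n) := ⟨by omega⟩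
  set P := (y-x).val with hPdef
  set Q := (z-x).val with hQdef
  have hy1 : (y+1-x).val = P + 1 := by
    have hh : y + 1 - x = (y - x) + 1 := by ring
    rw [hh, val_add_one (by omega)]
  have hz1 : (z+1-x).val = Q + 1 := by
    have hh : z + 1 - x = (z - x) + 1 := by ring
    rw [hh, val_add_one (by omega)]
  have hx1 : (x+1-x).val = 1 := by
    rw [add_sub_cancel_left, ZMod.val_one]
  set g := IMove f x with hg
  set P' : ZMod (2*(n-1)) := ((Q - P - 2 : ℕ) : ZMod (2*(n-1))) with hP'
  set Q' : ZMod (2*(n-1)) := ((Q - 2 : ℕ) : ZMod (2*(n-1))) with hQ'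
  have hP'v : P'.val = Q - P - 2 := ZMod.val_cast_of_lt (by omega)
  have hQ'v : Q'.val = Q - 2 := ZMod.val_cast_of_lt (by omega)
  have hP'1 : P' + 1 = ((Q - P - 1 : ℕ) : ZMod (2*(n-1))) := by
    rw [hP']
    have e : (Q - P - 1 : ℕ) = (Q - P - 2) + 1 := by omega
    rw [e]; push_cast; ring
  have hQ'1 : Q' + 1 = ((Q - 1 : ℕ) : ZMod (2*(n-1))) := by
    rw [hQ']
    have e : (Q - 1 : ℕ) = (Q - 2) + 1 := by omega
    rw [e]; push_cast; ring
  have hg1 : g P' = Q' := by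
    rw [hg, IMove, hfx]
    have hemb : imoveEmb n x z P' = y + 1 := by
      rw [imoveEmb, if_pos (by rw [hP'v]; omega), hP'v]
      have e : ((z-x).val - 1 - (Q - P - 2) : ℕ) = P + 1 := by rw [← hQdef]; omega
      rw [e]
      have e2 : ((P + 1 : ℕ) : ZMod (2*n)) = y + 1 - x := by rw [← hy1, val_toZMod]
      rw [e2]; ring
    rw [hemb]
    have hf2 : f (y+1) = x + 1 := by rw [← hfx1, hinv]
    rw [hf2, imoveProj, if_pos (by rw [hx1]; omega), hx1]
    rw [hQ']
    congr 1
  have hg2 : g (P' + 1) = Q' + 1 := by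
    rw [hg, IMove, hfx, hP'1]
    have hv : (((Q - P - 1 : ℕ) : ZMod (2*(n-1)))).val = Q - P - 1 :=
      ZMod.val_cast_of_lt (by omega)
    have hemb : imoveEmb n x z ((Q - P - 1 : ℕ) : ZMod (2*(n-1))) = y := by
      rw [imoveEmb, if_pos (by rw [hv]; omega), hv]
      have e : ((z-x).val - 1 - (Q - P - 1) : ℕ) = P := by rw [← hQdef]; omega
      rw [e]
      have e2 : ((P : ℕ) : ZMod (2*n)) = y - x := by rw [hPdef, val_toZMod]
      rw [e2]; ring
    rw [hemb, hfy, imoveProj, if_neg (by rw [hz1, ← hQdef]; omega), hz1]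
    rw [hQ'1]
    congr 1
  have hne1 : Q' ≠ P' := by
    intro h
    have := congrArg ZMod.val h
    rw [hQ'v, hP'v] at this; omega
  have hne2 : Q' ≠ P' + 1 := by
    intro h
    rw [hP'1] at h
    have := congrArg ZMod.val h
    rw [hQ'v, ZMod.val_cast_of_lt (by omega : Q - P - 1 < 2*(n-1))] at this; omega
  have hne3 : Q' + 1 ≠ P' := by
    intro h
    rw [hQ'1] at h
    have := congrArg ZMod.val h
    rw [hP'v, ZMod.val_cast_of_lt (by omega : Q - 1 < 2*(n-1))] at this; omega
  have hred : Reducible (IMove g P') :=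
    bigon_reducible (by omega) g P' Q' hg1 hg2 hne1 hne2 hne3
  exact Or.inr ⟨x, Or.inr ⟨P', hred⟩⟩

end Core

section Criterion
variable {N : ℕ}

lemma val_ne_zero_of_ne [NeZero N] {u v : ZMod N} (h : u ≠ v) : (u - v).val ≠ 0 := by
  intro hh
  exact h (by rwa [ZMod.val_eq_zero, sub_eq_zero] at hh)

lemma eq_add_one_of_val_eq_one [NeZero N] {u v : ZMod N} (h : (u - v).val = 1) :
    u = v + 1 := by
  have h2 : u - v = ((1:ℕ) : ZMod N) := by rw [← h, val_toZMod]
  rw [Nat.cast_one] at h2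
  rw [sub_eq_iff_eq_add.mp h2, add_comm]


lemma add_one_eq_of_val_eq [NeZero N] {u v : ZMod N} (h : (u - v).val = N - 1) :
    u + 1 = v := by
  have h2 : u - v = ((N - 1 : ℕ) : ZMod N) := by rw [← h, val_toZMod]
  have h3 : u + 1 - v = ((N - 1 + 1 : ℕ) : ZMod N) := by push_cast; rw [← h2]; ring
  have hN : (N - 1 + 1 : ℕ) = N := by have := NeZero.pos N; omega
  rw [hN, ZMod.natCast_self] at h3
  rwa [sub_eq_zero] at h3

lemma add_one_ne_self [NeZero N] (hN : 1 < N) (x : ZMod N) : x + 1 ≠ x := by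
  haveI : Fact (1 < N) := ⟨hN⟩
  intro hh
  have h2 := congrArg (· - x) hh
  simp only [add_sub_cancel_left, sub_self] at h2
  exact one_ne_zero h2

lemma inArc_compl [NeZero N] {a b x : ZMod N} (hxa : x ≠ a) (hxb : x ≠ b) (hab : a ≠ b) :
    InArc b a x ↔ ¬ InArc a b x := by
  have hA0 : (x - a).val ≠ 0 := val_ne_zero_of_ne hxa
  have hB0 : (b - a).val ≠ 0 := val_ne_zero_of_ne (Ne.symm hab)
  have hAB : (x - a).val ≠ (b - a).val := fun h => hxb (eq_of_sub_val_eq h)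
  have hAlt : (x - a).val < N := ZMod.val_lt _
  have hBlt : (b - a).val < N := ZMod.val_lt _
  have hab' : (a - b).val = N - (b - a).val := by
    have h0 : (a - a).val = 0 := by rw [sub_self, ZMod.val_zero]
    rw [shift_lt (o := a) (by omega), h0]; omega
  unfold InArc
  rw [hab']
  rcases le_or_gt (b - a).val (x - a).val with hc | hc
  · rw [shift_le (o := a) hc]; omega
  · rw [shift_lt (o := a) hc]; omega

lemma crosses_corner [NeZero N] (hN : 1 < N) (f : ZMod N → ZMod N) (x : ZMod N)
    (h1 : f x ≠ x) (h2 : f x ≠ x + 1) (h3 : f (x+1) ≠ x) (h4 : f (x+1) ≠ x + 1)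
    (h5 : f (x+1) ≠ f x) :
    Crosses f x (x+1) ↔ (f x - x).val < (f (x+1) - x).val := by
  haveI : Fact (1 < N) := ⟨hN⟩
  have hx1 : ((x+1) - x).val = 1 := by rw [add_sub_cancel_left, ZMod.val_one]
  have hA0 : (f x - x).val ≠ 0 := val_ne_zero_of_ne h1
  have hA1 : (f x - x).val ≠ 1 := fun h => h2 (eq_add_one_of_val_eq_one h)
  have hB0 : (f (x+1) - x).val ≠ 0 := val_ne_zero_of_ne h3
  have hAB : (f x - x).val ≠ (f (x+1) - x).val := fun h => h5 (eq_of_sub_val_eq h.symm)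
  unfold Crosses InArc Xor' Xor
  rw [hx1]
  constructor
  · rintro ⟨-, -, -, -, hx⟩
    omega
  · intro h
    exact ⟨add_one_ne_self hN x, Ne.symm h2, h3, h5,
      Or.inl ⟨⟨one_pos, by omega⟩, by omega⟩⟩

lemma crosses_corner' [NeZero N] (hN : 1 < N) (f : ZMod N → ZMod N) (x : ZMod N)
    (h1 : f x ≠ x) (h2 : f x ≠ x + 1) (h3 : f (x+1) ≠ x) (h4 : f (x+1) ≠ x + 1)
    (h5 : f (x+1) ≠ f x) :
    Crosses f (x+1) x ↔ (f x - x).val < (f (x+1) - x).val := by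
  haveI : Fact (1 < N) := ⟨hN⟩
  have hx1 : ((x+1) - x).val = 1 := by rw [add_sub_cancel_left, ZMod.val_one]
  have hA0 : (f x - x).val ≠ 0 := val_ne_zero_of_ne h1
  have hA1 : (f x - x).val ≠ 1 := fun h => h2 (eq_add_one_of_val_eq_one h)
  have hB0 : (f (x+1) - x).val ≠ 0 := val_ne_zero_of_ne h3
  have hB1 : (f (x+1) - x).val ≠ 1 := fun h => h4 (eq_add_one_of_val_eq_one h)
  have hAB : (f x - x).val ≠ (f (x+1) - x).val := fun h => h5 (eq_of_sub_val_eq h.symm)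
  have hAlt : (f x - x).val < N := ZMod.val_lt _
  have hBlt : (f (x+1) - x).val < N := ZMod.val_lt _
  have e1 : (x - (x+1)).val = N - 1 := by
    have h0 : (x - x).val = 0 := by rw [sub_self, ZMod.val_zero]
    rw [shift_lt (o := x) (by rw [h0, hx1]; omega), h0, hx1]; omega
  have e2 : (f (x+1) - (x+1)).val = (f (x+1) - x).val - 1 := by
    rw [shift_le (o := x) (by rw [hx1]; omega), hx1]
  have e3 : (f x - (x+1)).val = (f x - x).val - 1 := by
    rw [shift_le (o := x) (by rw [hx1]; omega), hx1]
  unfold Crosses InArc Xor' Xor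
  rw [e1, e2, e3]
  constructor
  · rintro ⟨-, -, -, -, hx⟩
    omega
  · intro h
    exact ⟨Ne.symm (add_one_ne_self hN x), Ne.symm h3, h2, Ne.symm h5,
      Or.inr ⟨⟨by omega, by omega⟩, by omega⟩⟩

lemma crosses_swap_fst [NeZero N] {f : ZMod N → ZMod N} (hinv : Function.Involutive f)
    {a c : ZMod N} (ha : f a ≠ a) (hca : c ≠ a) (hcfa : c ≠ f a) (hfca : f c ≠ a)
    (hfcfa : f c ≠ f a) :
    Crosses f (f a) c ↔ Crosses f a c := by
  have h1 : InArc (f a) a c ↔ ¬ InArc a (f a) c := inArc_compl hca hcfa (Ne.symm ha)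
  have h2 : InArc (f a) a (f c) ↔ ¬ InArc a (f a) (f c) :=
    inArc_compl hfca hfcfa (Ne.symm ha)
  unfold Crosses
  rw [hinv a, h1, h2]
  unfold Xor' Xor
  tauto

lemma crosses_snd {f : ZMod N → ZMod N} (hinv : Function.Involutive f) (a c : ZMod N) :
    Crosses f a (f c) ↔ Crosses f a c := by
  unfold Crosses
  rw [hinv c]
  unfold Xor' Xor
  tauto

end Criterion


/-- If a chord diagram contains a trigon of type A, then its reductivity is at most 2
(Lemma 2.3). -/
theorem trigonA_reductivity_le_two {n : ℕ} (hn : 1 ≤ n)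
    (f : ZMod (2 * n) → ZMod (2 * n)) (hinv : Function.Involutive f)
    (hfree : ∀ a, f a ≠ a) (i j k : ZMod (2 * n)) (ht : TrigonA f i j k) :
    ReductivityLe 2 f := by
  obtain ⟨⟨hcard, hmaps, hni, hnj, hnk⟩, hA⟩ := ht
  haveI : NeZero (2 * n) := ⟨by omega⟩
  have hn3 : 3 ≤ n := by
    have h1 := Finset.card_le_univ (trigonSet i j k)
    rw [hcard, ZMod.card] at h1
    omega
  have h2n : (1 : ℕ) < 2 * n := by omega
  haveI : Fact (1 < 2 * n) := ⟨h2n⟩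
  rw [trigonSet] at hcard
  obtain ⟨d1, d2, d3, d4, d5, d6, d7, d8, d9, d10, d11, d12, d13, d14, d15⟩ :=
    six_distinct hcard
  have hi0 : (i - i).val = 0 := by rw [sub_self, ZMod.val_zero]
  have h1v : (i + 1 - i).val = 1 := by rw [add_sub_cancel_left, ZMod.val_one]
  have hplt : (j - i).val < 2 * n := ZMod.val_lt _
  have hqlt : (k - i).val < 2 * n := ZMod.val_lt _
  have hp0 : (j - i).val ≠ 0 := val_ne_zero_of_ne d2.symm
  have hq0 : (k - i).val ≠ 0 := val_ne_zero_of_ne d4.symm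
  have hp1 : (j - i).val ≠ 1 := fun h => d6 (eq_add_one_of_val_eq_one h).symm
  have hq1 : (k - i).val ≠ 1 := fun h => d8 (eq_add_one_of_val_eq_one h).symm
  have hpN : (j - i).val ≠ 2 * n - 1 := fun h => d3 (add_one_eq_of_val_eq h).symm
  have hqN : (k - i).val ≠ 2 * n - 1 := fun h => d5 (add_one_eq_of_val_eq h).symm
  have hj1 : (j + 1 - i).val = (j - i).val + 1 := by
    have hh : j + 1 - i = (j - i) + 1 := by ring
    rw [hh, val_add_one (by omega)]
  have hk1 : (k + 1 - i).val = (k - i).val + 1 := by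
    have hh : k + 1 - i = (k - i) + 1 := by ring
    rw [hh, val_add_one (by omega)]
  have hpq : (j - i).val ≠ (k - i).val := fun h => d11 (eq_of_sub_val_eq (o := i) h)
  have hpq1 : (j - i).val ≠ (k - i).val + 1 := fun h =>
    d12 (eq_of_sub_val_eq (o := i) (by rw [hk1]; omega))
  have hqp1 : (k - i).val ≠ (j - i).val + 1 := fun h =>
    d13 (eq_of_sub_val_eq (o := i) (by rw [hj1]; omega))
  have hf6 : ∀ x, x ∈ trigonSet i j k →
      (f x = i ∨ f x = i + 1 ∨ f x = j ∨ f x = j + 1 ∨ f x = k ∨ f x = k + 1) := by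
    intro x hx
    have hx2 := hmaps x hx
    simpa [trigonSet] using hx2
  have hmi := hf6 i (by simp [trigonSet])
  rcases hmi with hfi | hfi | hfi | hfi | hfi | hfi
  · exact absurd hfi (hfree i)
  · exact absurd hfi hni
  · -- f i = j
    have hfj : f j = i := by rw [← hfi]; exact hinv i
    have hmi1 := hf6 (i + 1) (by simp [trigonSet])
    rcases hmi1 with h | h | h | h | h | h
    · exfalso; have hh := congrArg f h; rw [hinv (i + 1), hfi] at hh; exact d6 hh
    · exact absurd h (hfree (i + 1))
    · exfalso; have hh := congrArg f h; rw [hinv (i + 1), hfj] at hh; exact d1 hh.symm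
    · exfalso
      have hfj1 : f (j + 1) = i + 1 := by rw [← h]; exact hinv (i + 1)
      have hmk := hf6 k (by simp [trigonSet])
      rcases hmk with h' | h' | h' | h' | h' | h'
      · have hh := congrArg f h'; rw [hinv k, hfi] at hh; exact d11 hh.symm
      · have hh := congrArg f h'; rw [hinv k, h] at hh; exact d13 hh.symm
      · have hh := congrArg f h'; rw [hinv k, hfj] at hh; exact d4 hh.symm
      · have hh := congrArg f h'; rw [hinv k, hfj1] at hh; exact d8 hh.symm
      · exact absurd h' (hfree k)
      · exact absurd h' hnk
    · -- CASE 1: f i = j, f (i+1) = k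
      have hfi1 : f (i + 1) = k := h
      have hfj : f j = i := by rw [← hfi]; exact hinv i
      have hfk : f k = i + 1 := by rw [← hfi1]; exact hinv (i + 1)
      have hm := hf6 (j + 1) (by simp [trigonSet])
      have hfj1 : f (j + 1) = k + 1 := by
        rcases hm with h' | h' | h' | h' | h' | h'
        · exfalso; have hh := congrArg f h'; rw [hinv (j + 1), hfi] at hh; exact d10.symm hh
        · exfalso; have hh := congrArg f h'; rw [hinv (j + 1), hfi1] at hh; exact d13 hh
        · exfalso; have hh := congrArg f h'; rw [hinv (j + 1), hfj] at hh; exact d3.symm hh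
        · exact absurd h' (hfree (j + 1))
        · exfalso; have hh := congrArg f h'; rw [hinv (j + 1), hfk] at hh; exact d7.symm hh
        · exact h'
      have hfk1 : f (k + 1) = j + 1 := by rw [← hfj1]; exact hinv (j + 1)
      have htt : trigonThird f i j = j + 1 := by rw [trigonThird, if_pos (Or.inl hfi.symm)]
      rw [htt] at hA
      have hC1 := crosses_corner h2n f i (hfree i) hni (by rw [hfi1]; exact d4.symm) (hfree (i + 1)) (by rw [hfi1, hfi]; exact d11.symm)
      rw [hfi, hfi1] at hC1
      have hs1 : Crosses f j (j + 1) ↔ Crosses f i (j + 1) := by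
        have hs := crosses_swap_fst hinv (hfree i) d3.symm (by rw [hfi]; exact d10.symm) (by rw [hfj1]; exact d5.symm) (by rw [hfj1, hfi]; exact d12.symm)
        rw [hfi] at hs; exact hs
      have hcora := crosses_corner h2n f j (hfree j) (by rw [hfj]; exact d3) (by rw [hfj1]; exact d12.symm) (hfree (j + 1)) (by rw [hfj1, hfj]; exact d5.symm)
      rw [hfj, hfj1] at hcora
      have hC2 := hs1.symm.trans hcora
      have hs2 : Crosses f k (j + 1) ↔ Crosses f (i + 1) (j + 1) := by
        have hs := crosses_swap_fst hinv (hfree (i + 1)) d7.symm (by rw [hfi1]; exact d13) (by rw [hfj1]; exact d9.symm) (by rw [hfj1, hfi1]; exact d15.symm)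
        rw [hfi1] at hs; exact hs
      have hs3b := crosses_snd hinv k (j + 1)
      rw [hfj1] at hs3b
      have hcorb := crosses_corner h2n f k (hfree k) (by rw [hfk]; exact d9) (by rw [hfk1]; exact d13) (hfree (k + 1)) (by rw [hfk1, hfk]; exact d7.symm)
      rw [hfk, hfk1] at hcorb
      have hC3 := hs2.symm.trans (hs3b.symm.trans hcorb)
      rcases (by omega : (j - i).val + 2 ≤ (k - i).val ∨ (k - i).val + 2 ≤ (j - i).val) with hO | hO
      · have eKJ : (k - j).val = (k - i).val - (j - i).val := by rw [shift_le (o := i) (by omega)]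
        have eIJ : (i - j).val = 0 + 2*n - (j - i).val := by rw [shift_lt (o := i) (by rw [hi0]; omega), hi0]
        exact core_lemma hn3 f hinv j k i hfj hfj1 hfk (by rw [eKJ]; omega) (by rw [eKJ, eIJ]; omega) (by rw [eIJ]; omega)
      · have eIJ : (i - j).val = 0 + 2*n - (j - i).val := by rw [shift_lt (o := i) (by rw [hi0]; omega), hi0]
        have eK1J : (k + 1 - j).val = (k - i).val + 1 + 2*n - (j - i).val := by rw [shift_lt (o := i) (by rw [hk1]; omega), hk1]
        have eI1K : (i + 1 - k).val = 1 + 2*n - (k - i).val := by rw [shift_lt (o := i) (by rw [h1v]; omega), h1v]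
        have eJ1K : (j + 1 - k).val = (j - i).val + 1 - (k - i).val := by rw [shift_le (o := i) (by rw [hj1]; omega), hj1]
        rw [eIJ, eK1J] at hC2
        rw [eI1K, eJ1K] at hC3
        rw [hC1, hC2, hC3] at hA
        exfalso; unfold ExactlyTwo at hA; omega
    · -- CASE 2: f i = j, f (i+1) = k + 1
      have hfi1 : f (i + 1) = k + 1 := h
      have hfj : f j = i := by rw [← hfi]; exact hinv i
      have hfk1 : f (k + 1) = i + 1 := by rw [← hfi1]; exact hinv (i + 1)
      have hm := hf6 (j + 1) (by simp [trigonSet])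
      have hfj1 : f (j + 1) = k := by
        rcases hm with h' | h' | h' | h' | h' | h'
        · exfalso; have hh := congrArg f h'; rw [hinv (j + 1), hfi] at hh; exact d10.symm hh
        · exfalso; have hh := congrArg f h'; rw [hinv (j + 1), hfi1] at hh; exact d14 hh
        · exfalso; have hh := congrArg f h'; rw [hinv (j + 1), hfj] at hh; exact d3.symm hh
        · exact absurd h' (hfree (j + 1))
        · exact h'
        · exfalso; have hh := congrArg f h'; rw [hinv (j + 1), hfk1] at hh; exact d7.symm hh
      have hfk : f k = j + 1 := by rw [← hfj1]; exact hinv (j + 1)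
      have htt : trigonThird f i j = j + 1 := by rw [trigonThird, if_pos (Or.inl hfi.symm)]
      rw [htt] at hA
      have hC1 := crosses_corner h2n f i (hfree i) hni (by rw [hfi1]; exact d5.symm) (hfree (i + 1)) (by rw [hfi1, hfi]; exact d12.symm)
      rw [hfi, hfi1] at hC1
      rw [hk1] at hC1
      have hs1 : Crosses f j (j + 1) ↔ Crosses f i (j + 1) := by
        have hs := crosses_swap_fst hinv (hfree i) d3.symm (by rw [hfi]; exact d10.symm) (by rw [hfj1]; exact d4.symm) (by rw [hfj1, hfi]; exact d11.symm)
        rw [hfi] at hs; exact hs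
      have hcora := crosses_corner h2n f j (hfree j) (by rw [hfj]; exact d3) (by rw [hfj1]; exact d11.symm) (hfree (j + 1)) (by rw [hfj1, hfj]; exact d4.symm)
      rw [hfj, hfj1] at hcora
      have hC2 := hs1.symm.trans hcora
      have hs2 : Crosses f (k + 1) (j + 1) ↔ Crosses f (i + 1) (j + 1) := by
        have hs := crosses_swap_fst hinv (hfree (i + 1)) d7.symm (by rw [hfi1]; exact d14) (by rw [hfj1]; exact d8.symm) (by rw [hfj1, hfi1]; exact d15)
        rw [hfi1] at hs; exact hs
      have hs3b := crosses_snd hinv (k + 1) (j + 1)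
      rw [hfj1] at hs3b
      have hcorb := crosses_corner' h2n f k (hfree k) (by rw [hfk]; exact d14) (by rw [hfk1]; exact d8) (hfree (k + 1)) (by rw [hfk1, hfk]; exact d7)
      rw [hfk, hfk1] at hcorb
      have hC3 := hs2.symm.trans (hs3b.symm.trans hcorb)
      rcases (by omega : (j - i).val + 2 ≤ (k - i).val ∨ (k - i).val + 2 ≤ (j - i).val) with hO | hO
      · have eIJ : (i - j).val = 0 + 2*n - (j - i).val := by rw [shift_lt (o := i) (by rw [hi0]; omega), hi0]
        have eKJ : (k - j).val = (k - i).val - (j - i).val := by rw [shift_le (o := i) (by omega)]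
        have eJ1K : (j + 1 - k).val = (j - i).val + 1 + 2*n - (k - i).val := by rw [shift_lt (o := i) (by rw [hj1]; omega), hj1]
        have eI1K : (i + 1 - k).val = 1 + 2*n - (k - i).val := by rw [shift_lt (o := i) (by rw [h1v]; omega), h1v]
        rw [eIJ, eKJ] at hC2
        rw [eJ1K, eI1K] at hC3
        rw [hC1, hC2, hC3] at hA
        exfalso; unfold ExactlyTwo at hA; omega
      · exact core_lemma hn3 f hinv i k j hfi hfi1 hfk (by omega) (by omega) (by omega)
  · -- f i = j + 1
    have hfj1 : f (j + 1) = i := by rw [← hfi]; exact hinv i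
    have hmi1 := hf6 (i + 1) (by simp [trigonSet])
    rcases hmi1 with h | h | h | h | h | h
    · exfalso; have hh := congrArg f h; rw [hinv (i + 1), hfi] at hh; exact d7 hh
    · exact absurd h (hfree (i + 1))
    · exfalso
      have hfj : f j = i + 1 := by rw [← h]; exact hinv (i + 1)
      have hmk := hf6 k (by simp [trigonSet])
      rcases hmk with h' | h' | h' | h' | h' | h'
      · have hh := congrArg f h'; rw [hinv k, hfi] at hh; exact d13 hh.symm
      · have hh := congrArg f h'; rw [hinv k, h] at hh; exact d11 hh.symm
      · have hh := congrArg f h'; rw [hinv k, hfj] at hh; exact d8 hh.symm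
      · have hh := congrArg f h'; rw [hinv k, hfj1] at hh; exact d4 hh.symm
      · exact absurd h' (hfree k)
      · exact absurd h' hnk
    · exfalso; have hh := congrArg f h; rw [hinv (i + 1), hfj1] at hh; exact d1 hh.symm
    · -- CASE 3: f i = j + 1, f (i+1) = k
      have hfi1 : f (i + 1) = k := h
      have hfj1 : f (j + 1) = i := by rw [← hfi]; exact hinv i
      have hfk : f k = i + 1 := by rw [← hfi1]; exact hinv (i + 1)
      have hm := hf6 j (by simp [trigonSet])
      have hfj : f j = k + 1 := by
        rcases hm with h' | h' | h' | h' | h' | h'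
        · exfalso; have hh := congrArg f h'; rw [hinv j, hfi] at hh; exact d10 hh
        · exfalso; have hh := congrArg f h'; rw [hinv j, hfi1] at hh; exact d11 hh
        · exact absurd h' (hfree j)
        · exact absurd h' hnj
        · exfalso; have hh := congrArg f h'; rw [hinv j, hfk] at hh; exact d6.symm hh
        · exact h'
      have hfk1 : f (k + 1) = j := by rw [← hfj]; exact hinv j
      have htt : trigonThird f i j = j := by
        rw [trigonThird, if_neg]
        rintro (h' | h')
        · rw [hfi] at h'; exact d10 h'
        · rw [hfi1] at h'; exact d11 h'
      rw [htt] at hA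
      have hC1 := crosses_corner h2n f i (hfree i) hni (by rw [hfi1]; exact d4.symm) (hfree (i + 1)) (by rw [hfi1, hfi]; exact d13.symm)
      rw [hfi, hfi1] at hC1
      rw [hj1] at hC1
      have hs1 : Crosses f (j + 1) j ↔ Crosses f i j := by
        have hs := crosses_swap_fst hinv (hfree i) d2.symm (by rw [hfi]; exact d10) (by rw [hfj]; exact d5.symm) (by rw [hfj, hfi]; exact d14.symm)
        rw [hfi] at hs; exact hs
      have hcora := crosses_corner' h2n f j (hfree j) (by rw [hfj]; exact d14.symm) (by rw [hfj1]; exact d2) (hfree (j + 1)) (by rw [hfj1, hfj]; exact d5)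
      rw [hfj, hfj1] at hcora
      have hC2 := hs1.symm.trans hcora
      have hs2 : Crosses f k j ↔ Crosses f (i + 1) j := by
        have hs := crosses_swap_fst hinv (hfree (i + 1)) d6.symm (by rw [hfi1]; exact d11) (by rw [hfj]; exact d9.symm) (by rw [hfj, hfi1]; exact d15.symm)
        rw [hfi1] at hs; exact hs
      have hs3b := crosses_snd hinv k j
      rw [hfj] at hs3b
      have hcorb := crosses_corner h2n f k (hfree k) (by rw [hfk]; exact d9) (by rw [hfk1]; exact d11) (hfree (k + 1)) (by rw [hfk1, hfk]; exact d6.symm)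
      rw [hfk, hfk1] at hcorb
      have hC3 := hs2.symm.trans (hs3b.symm.trans hcorb)
      rcases (by omega : (j - i).val + 2 ≤ (k - i).val ∨ (k - i).val + 2 ≤ (j - i).val) with hO | hO
      · have eK1J : (k + 1 - j).val = (k - i).val + 1 - (j - i).val := by rw [shift_le (o := i) (by rw [hk1]; omega), hk1]
        have eIJ : (i - j).val = 0 + 2*n - (j - i).val := by rw [shift_lt (o := i) (by rw [hi0]; omega), hi0]
        have eI1K : (i + 1 - k).val = 1 + 2*n - (k - i).val := by rw [shift_lt (o := i) (by rw [h1v]; omega), h1v]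
        have eJK : (j - k).val = (j - i).val + 2*n - (k - i).val := by rw [shift_lt (o := i) (by omega)]
        rw [eK1J, eIJ] at hC2
        rw [eI1K, eJK] at hC3
        rw [hC1, hC2, hC3] at hA
        exfalso; unfold ExactlyTwo at hA; omega
      · have eK1J : (k + 1 - j).val = (k - i).val + 1 + 2*n - (j - i).val := by rw [shift_lt (o := i) (by rw [hk1]; omega), hk1]
        have eIJ : (i - j).val = 0 + 2*n - (j - i).val := by rw [shift_lt (o := i) (by rw [hi0]; omega), hi0]
        have eI1K : (i + 1 - k).val = 1 + 2*n - (k - i).val := by rw [shift_lt (o := i) (by rw [h1v]; omega), h1v]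
        have eJK : (j - k).val = (j - i).val - (k - i).val := by rw [shift_le (o := i) (by omega)]
        rw [eK1J, eIJ] at hC2
        rw [eI1K, eJK] at hC3
        rw [hC1, hC2, hC3] at hA
        exfalso; unfold ExactlyTwo at hA; omega
    · -- CASE 4: f i = j + 1, f (i+1) = k + 1
      have hfi1 : f (i + 1) = k + 1 := h
      have hfj1 : f (j + 1) = i := by rw [← hfi]; exact hinv i
      have hfk1 : f (k + 1) = i + 1 := by rw [← hfi1]; exact hinv (i + 1)
      have hm := hf6 j (by simp [trigonSet])
      have hfj : f j = k := by
        rcases hm with h' | h' | h' | h' | h' | h'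
        · exfalso; have hh := congrArg f h'; rw [hinv j, hfi] at hh; exact d10 hh
        · exfalso; have hh := congrArg f h'; rw [hinv j, hfi1] at hh; exact d12 hh
        · exact absurd h' (hfree j)
        · exact absurd h' hnj
        · exact h'
        · exfalso; have hh := congrArg f h'; rw [hinv j, hfk1] at hh; exact d6.symm hh
      have hfk : f k = j := by rw [← hfj]; exact hinv j
      have htt : trigonThird f i j = j := by
        rw [trigonThird, if_neg]
        rintro (h' | h')
        · rw [hfi] at h'; exact d10 h'
        · rw [hfi1] at h'; exact d12 h'
      rw [htt] at hA
      have hC1 := crosses_corner h2n f i (hfree i) hni (by rw [hfi1]; exact d5.symm) (hfree (i + 1)) (by rw [hfi1, hfi]; exact d14.symm)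
      rw [hfi, hfi1] at hC1
      rw [hj1, hk1] at hC1
      have hs1 : Crosses f (j + 1) j ↔ Crosses f i j := by
        have hs := crosses_swap_fst hinv (hfree i) d2.symm (by rw [hfi]; exact d10) (by rw [hfj]; exact d4.symm) (by rw [hfj, hfi]; exact d13.symm)
        rw [hfi] at hs; exact hs
      have hcora := crosses_corner' h2n f j (hfree j) (by rw [hfj]; exact d13.symm) (by rw [hfj1]; exact d2) (hfree (j + 1)) (by rw [hfj1, hfj]; exact d4)
      rw [hfj, hfj1] at hcora
      have hC2 := hs1.symm.trans hcora
      have hs2 : Crosses f (k + 1) j ↔ Crosses f (i + 1) j := by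
        have hs := crosses_swap_fst hinv (hfree (i + 1)) d6.symm (by rw [hfi1]; exact d12) (by rw [hfj]; exact d8.symm) (by rw [hfj, hfi1]; exact d15)
        rw [hfi1] at hs; exact hs
      have hs3b := crosses_snd hinv (k + 1) j
      rw [hfj] at hs3b
      have hcorb := crosses_corner' h2n f k (hfree k) (by rw [hfk]; exact d12) (by rw [hfk1]; exact d8) (hfree (k + 1)) (by rw [hfk1, hfk]; exact d6)
      rw [hfk, hfk1] at hcorb
      have hC3 := hs2.symm.trans (hs3b.symm.trans hcorb)
      rcases (by omega : (j - i).val + 2 ≤ (k - i).val ∨ (k - i).val + 2 ≤ (j - i).val) with hO | hO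
      · have eIK : (i - k).val = 0 + 2*n - (k - i).val := by rw [shift_lt (o := i) (by rw [hi0]; omega), hi0]
        have eJK : (j - k).val = (j - i).val + 2*n - (k - i).val := by rw [shift_lt (o := i) (by omega)]
        exact core_lemma hn3 f hinv k i j hfk hfk1 hfi (by rw [eIK]; omega) (by rw [eIK, eJK]; omega) (by rw [eJK]; omega)
      · have eKJ : (k - j).val = (k - i).val + 2*n - (j - i).val := by rw [shift_lt (o := i) (by omega)]
        have eIJ : (i - j).val = 0 + 2*n - (j - i).val := by rw [shift_lt (o := i) (by rw [hi0]; omega), hi0]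
        have eJK : (j - k).val = (j - i).val - (k - i).val := by rw [shift_le (o := i) (by omega)]
        have eI1K : (i + 1 - k).val = 1 + 2*n - (k - i).val := by rw [shift_lt (o := i) (by rw [h1v]; omega), h1v]
        rw [eKJ, eIJ] at hC2
        rw [eJK, eI1K] at hC3
        rw [hC1, hC2, hC3] at hA
        exfalso; unfold ExactlyTwo at hA; omega
  · -- f i = k
    have hfk : f k = i := by rw [← hfi]; exact hinv i
    have hmi1 := hf6 (i + 1) (by simp [trigonSet])
    rcases hmi1 with h | h | h | h | h | h
    · exfalso; have hh := congrArg f h; rw [hinv (i + 1), hfi] at hh; exact d8 hh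
    · exact absurd h (hfree (i + 1))
    · -- CASE 5: f i = k, f (i+1) = j
      have hfi1 : f (i + 1) = j := h
      have hfk : f k = i := by rw [← hfi]; exact hinv i
      have hfj : f j = i + 1 := by rw [← hfi1]; exact hinv (i + 1)
      have hm := hf6 (j + 1) (by simp [trigonSet])
      have hfj1 : f (j + 1) = k + 1 := by
        rcases hm with h' | h' | h' | h' | h' | h'
        · exfalso; have hh := congrArg f h'; rw [hinv (j + 1), hfi] at hh; exact d13 hh
        · exfalso; have hh := congrArg f h'; rw [hinv (j + 1), hfi1] at hh; exact d10.symm hh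
        · exfalso; have hh := congrArg f h'; rw [hinv (j + 1), hfj] at hh; exact d7.symm hh
        · exact absurd h' (hfree (j + 1))
        · exfalso; have hh := congrArg f h'; rw [hinv (j + 1), hfk] at hh; exact d3.symm hh
        · exact h'
      have hfk1 : f (k + 1) = j + 1 := by rw [← hfj1]; exact hinv (j + 1)
      have htt : trigonThird f i j = j + 1 := by rw [trigonThird, if_pos (Or.inr hfi1.symm)]
      rw [htt] at hA
      have hC1 := crosses_corner h2n f i (hfree i) hni (by rw [hfi1]; exact d2.symm) (hfree (i + 1)) (by rw [hfi1, hfi]; exact d11)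
      rw [hfi, hfi1] at hC1
      have hs1 : Crosses f k (j + 1) ↔ Crosses f i (j + 1) := by
        have hs := crosses_swap_fst hinv (hfree i) d3.symm (by rw [hfi]; exact d13) (by rw [hfj1]; exact d5.symm) (by rw [hfj1, hfi]; exact d15.symm)
        rw [hfi] at hs; exact hs
      have hs3a := crosses_snd hinv k (j + 1)
      rw [hfj1] at hs3a
      have hcora := crosses_corner h2n f k (hfree k) (by rw [hfk]; exact d5) (by rw [hfk1]; exact d13) (hfree (k + 1)) (by rw [hfk1, hfk]; exact d3.symm)
      rw [hfk, hfk1] at hcora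
      have hC2 := hs1.symm.trans (hs3a.symm.trans hcora)
      have hs2 : Crosses f j (j + 1) ↔ Crosses f (i + 1) (j + 1) := by
        have hs := crosses_swap_fst hinv (hfree (i + 1)) d7.symm (by rw [hfi1]; exact d10.symm) (by rw [hfj1]; exact d9.symm) (by rw [hfj1, hfi1]; exact d12.symm)
        rw [hfi1] at hs; exact hs
      have hcorb := crosses_corner h2n f j (hfree j) (by rw [hfj]; exact d7) (by rw [hfj1]; exact d12.symm) (hfree (j + 1)) (by rw [hfj1, hfj]; exact d9.symm)
      rw [hfj, hfj1] at hcorb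
      have hC3 := hs2.symm.trans hcorb
      rcases (by omega : (j - i).val + 2 ≤ (k - i).val ∨ (k - i).val + 2 ≤ (j - i).val) with hO | hO
      · have eIK : (i - k).val = 0 + 2*n - (k - i).val := by rw [shift_lt (o := i) (by rw [hi0]; omega), hi0]
        have eJ1K : (j + 1 - k).val = (j - i).val + 1 + 2*n - (k - i).val := by rw [shift_lt (o := i) (by rw [hj1]; omega), hj1]
        have eI1J : (i + 1 - j).val = 1 + 2*n - (j - i).val := by rw [shift_lt (o := i) (by rw [h1v]; omega), h1v]
        have eK1J : (k + 1 - j).val = (k - i).val + 1 - (j - i).val := by rw [shift_le (o := i) (by rw [hk1]; omega), hk1]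
        rw [eIK, eJ1K] at hC2
        rw [eI1J, eK1J] at hC3
        rw [hC1, hC2, hC3] at hA
        exfalso; unfold ExactlyTwo at hA; omega
      · have eJK : (j - k).val = (j - i).val - (k - i).val := by rw [shift_le (o := i) (by omega)]
        have eIK : (i - k).val = 0 + 2*n - (k - i).val := by rw [shift_lt (o := i) (by rw [hi0]; omega), hi0]
        exact core_lemma hn3 f hinv k j i hfk hfk1 hfj (by rw [eJK]; omega) (by rw [eJK, eIK]; omega) (by rw [eIK]; omega)
    · -- CASE 6: f i = k, f (i+1) = j + 1
      have hfi1 : f (i + 1) = j + 1 := h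
      have hfk : f k = i := by rw [← hfi]; exact hinv i
      have hfj1 : f (j + 1) = i + 1 := by rw [← hfi1]; exact hinv (i + 1)
      have hm := hf6 j (by simp [trigonSet])
      have hfj : f j = k + 1 := by
        rcases hm with h' | h' | h' | h' | h' | h'
        · exfalso; have hh := congrArg f h'; rw [hinv j, hfi] at hh; exact d11 hh
        · exfalso; have hh := congrArg f h'; rw [hinv j, hfi1] at hh; exact d10 hh
        · exact absurd h' (hfree j)
        · exact absurd h' hnj
        · exfalso; have hh := congrArg f h'; rw [hinv j, hfk] at hh; exact d2.symm hh
        · exact h'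
      have hfk1 : f (k + 1) = j := by rw [← hfj]; exact hinv j
      have htt : trigonThird f i j = j := by
        rw [trigonThird, if_neg]
        rintro (h' | h')
        · rw [hfi] at h'; exact d11 h'
        · rw [hfi1] at h'; exact d10 h'
      rw [htt] at hA
      have hC1 := crosses_corner h2n f i (hfree i) hni (by rw [hfi1]; exact d3.symm) (hfree (i + 1)) (by rw [hfi1, hfi]; exact d13)
      rw [hfi, hfi1] at hC1
      rw [hj1] at hC1
      have hs1 : Crosses f k j ↔ Crosses f i j := by
        have hs := crosses_swap_fst hinv (hfree i) d2.symm (by rw [hfi]; exact d11) (by rw [hfj]; exact d5.symm) (by rw [hfj, hfi]; exact d15.symm)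
        rw [hfi] at hs; exact hs
      have hs3a := crosses_snd hinv k j
      rw [hfj] at hs3a
      have hcora := crosses_corner h2n f k (hfree k) (by rw [hfk]; exact d5) (by rw [hfk1]; exact d11) (hfree (k + 1)) (by rw [hfk1, hfk]; exact d2.symm)
      rw [hfk, hfk1] at hcora
      have hC2 := hs1.symm.trans (hs3a.symm.trans hcora)
      have hs2 : Crosses f (j + 1) j ↔ Crosses f (i + 1) j := by
        have hs := crosses_swap_fst hinv (hfree (i + 1)) d6.symm (by rw [hfi1]; exact d10) (by rw [hfj]; exact d9.symm) (by rw [hfj, hfi1]; exact d14.symm)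
        rw [hfi1] at hs; exact hs
      have hcorb := crosses_corner' h2n f j (hfree j) (by rw [hfj]; exact d14.symm) (by rw [hfj1]; exact d6) (hfree (j + 1)) (by rw [hfj1, hfj]; exact d9)
      rw [hfj, hfj1] at hcorb
      have hC3 := hs2.symm.trans hcorb
      rcases (by omega : (j - i).val + 2 ≤ (k - i).val ∨ (k - i).val + 2 ≤ (j - i).val) with hO | hO
      · exact core_lemma hn3 f hinv i j k hfi hfi1 hfj (by omega) (by omega) (by omega)
      · have eIK : (i - k).val = 0 + 2*n - (k - i).val := by rw [shift_lt (o := i) (by rw [hi0]; omega), hi0]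
        have eJK : (j - k).val = (j - i).val - (k - i).val := by rw [shift_le (o := i) (by omega)]
        have eK1J : (k + 1 - j).val = (k - i).val + 1 + 2*n - (j - i).val := by rw [shift_lt (o := i) (by rw [hk1]; omega), hk1]
        have eI1J : (i + 1 - j).val = 1 + 2*n - (j - i).val := by rw [shift_lt (o := i) (by rw [h1v]; omega), h1v]
        rw [eIK, eJK] at hC2
        rw [eK1J, eI1J] at hC3
        rw [hC1, hC2, hC3] at hA
        exfalso; unfold ExactlyTwo at hA; omega
    · exfalso; have hh := congrArg f h; rw [hinv (i + 1), hfk] at hh; exact d1 hh.symm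
    · exfalso
      have hfk1 : f (k + 1) = i + 1 := by rw [← h]; exact hinv (i + 1)
      have hmj := hf6 j (by simp [trigonSet])
      rcases hmj with h' | h' | h' | h' | h' | h'
      · have hh := congrArg f h'; rw [hinv j, hfi] at hh; exact d11 hh
      · have hh := congrArg f h'; rw [hinv j, h] at hh; exact d12 hh
      · exact absurd h' (hfree j)
      · exact absurd h' hnj
      · have hh := congrArg f h'; rw [hinv j, hfk] at hh; exact d2 hh.symm
      · have hh := congrArg f h'; rw [hinv j, hfk1] at hh; exact d6 hh.symm
  · -- f i = k + 1
    have hfk1 : f (k + 1) = i := by rw [← hfi]; exact hinv i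
    have hmi1 := hf6 (i + 1) (by simp [trigonSet])
    rcases hmi1 with h | h | h | h | h | h
    · exfalso; have hh := congrArg f h; rw [hinv (i + 1), hfi] at hh; exact d9 hh
    · exact absurd h (hfree (i + 1))
    · -- CASE 7: f i = k + 1, f (i+1) = j
      have hfi1 : f (i + 1) = j := h
      have hfk1 : f (k + 1) = i := by rw [← hfi]; exact hinv i
      have hfj : f j = i + 1 := by rw [← hfi1]; exact hinv (i + 1)
      have hm := hf6 (j + 1) (by simp [trigonSet])
      have hfj1 : f (j + 1) = k := by
        rcases hm with h' | h' | h' | h' | h' | h'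
        · exfalso; have hh := congrArg f h'; rw [hinv (j + 1), hfi] at hh; exact d14 hh
        · exfalso; have hh := congrArg f h'; rw [hinv (j + 1), hfi1] at hh; exact d10.symm hh
        · exfalso; have hh := congrArg f h'; rw [hinv (j + 1), hfj] at hh; exact d7.symm hh
        · exact absurd h' (hfree (j + 1))
        · exact h'
        · exfalso; have hh := congrArg f h'; rw [hinv (j + 1), hfk1] at hh; exact d3.symm hh
      have hfk : f k = j + 1 := by rw [← hfj1]; exact hinv (j + 1)
      have htt : trigonThird f i j = j + 1 := by rw [trigonThird, if_pos (Or.inr hfi1.symm)]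
      rw [htt] at hA
      have hC1 := crosses_corner h2n f i (hfree i) hni (by rw [hfi1]; exact d2.symm) (hfree (i + 1)) (by rw [hfi1, hfi]; exact d12)
      rw [hfi, hfi1] at hC1
      rw [hk1] at hC1
      have hs1 : Crosses f (k + 1) (j + 1) ↔ Crosses f i (j + 1) := by
        have hs := crosses_swap_fst hinv (hfree i) d3.symm (by rw [hfi]; exact d14) (by rw [hfj1]; exact d4.symm) (by rw [hfj1, hfi]; exact d15)
        rw [hfi] at hs; exact hs
      have hs3a := crosses_snd hinv (k + 1) (j + 1)
      rw [hfj1] at hs3a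
      have hcora := crosses_corner' h2n f k (hfree k) (by rw [hfk]; exact d14) (by rw [hfk1]; exact d4) (hfree (k + 1)) (by rw [hfk1, hfk]; exact d3)
      rw [hfk, hfk1] at hcora
      have hC2 := hs1.symm.trans (hs3a.symm.trans hcora)
      have hs2 : Crosses f j (j + 1) ↔ Crosses f (i + 1) (j + 1) := by
        have hs := crosses_swap_fst hinv (hfree (i + 1)) d7.symm (by rw [hfi1]; exact d10.symm) (by rw [hfj1]; exact d8.symm) (by rw [hfj1, hfi1]; exact d11.symm)
        rw [hfi1] at hs; exact hs
      have hcorb := crosses_corner h2n f j (hfree j) (by rw [hfj]; exact d7) (by rw [hfj1]; exact d11.symm) (hfree (j + 1)) (by rw [hfj1, hfj]; exact d8.symm)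
      rw [hfj, hfj1] at hcorb
      have hC3 := hs2.symm.trans hcorb
      rcases (by omega : (j - i).val + 2 ≤ (k - i).val ∨ (k - i).val + 2 ≤ (j - i).val) with hO | hO
      · have eJ1K : (j + 1 - k).val = (j - i).val + 1 + 2*n - (k - i).val := by rw [shift_lt (o := i) (by rw [hj1]; omega), hj1]
        have eIK : (i - k).val = 0 + 2*n - (k - i).val := by rw [shift_lt (o := i) (by rw [hi0]; omega), hi0]
        have eI1J : (i + 1 - j).val = 1 + 2*n - (j - i).val := by rw [shift_lt (o := i) (by rw [h1v]; omega), h1v]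
        have eKJ : (k - j).val = (k - i).val - (j - i).val := by rw [shift_le (o := i) (by omega)]
        rw [eJ1K, eIK] at hC2
        rw [eI1J, eKJ] at hC3
        rw [hC1, hC2, hC3] at hA
        exfalso; unfold ExactlyTwo at hA; omega
      · have eJ1K : (j + 1 - k).val = (j - i).val + 1 - (k - i).val := by rw [shift_le (o := i) (by rw [hj1]; omega), hj1]
        have eIK : (i - k).val = 0 + 2*n - (k - i).val := by rw [shift_lt (o := i) (by rw [hi0]; omega), hi0]
        have eI1J : (i + 1 - j).val = 1 + 2*n - (j - i).val := by rw [shift_lt (o := i) (by rw [h1v]; omega), h1v]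
        have eKJ : (k - j).val = (k - i).val + 2*n - (j - i).val := by rw [shift_lt (o := i) (by omega)]
        rw [eJ1K, eIK] at hC2
        rw [eI1J, eKJ] at hC3
        rw [hC1, hC2, hC3] at hA
        exfalso; unfold ExactlyTwo at hA; omega
    · -- CASE 8: f i = k + 1, f (i+1) = j + 1
      have hfi1 : f (i + 1) = j + 1 := h
      have hfk1 : f (k + 1) = i := by rw [← hfi]; exact hinv i
      have hfj1 : f (j + 1) = i + 1 := by rw [← hfi1]; exact hinv (i + 1)
      have hm := hf6 j (by simp [trigonSet])
      have hfj : f j = k := by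
        rcases hm with h' | h' | h' | h' | h' | h'
        · exfalso; have hh := congrArg f h'; rw [hinv j, hfi] at hh; exact d12 hh
        · exfalso; have hh := congrArg f h'; rw [hinv j, hfi1] at hh; exact d10 hh
        · exact absurd h' (hfree j)
        · exact absurd h' hnj
        · exact h'
        · exfalso; have hh := congrArg f h'; rw [hinv j, hfk1] at hh; exact d2.symm hh
      have hfk : f k = j := by rw [← hfj]; exact hinv j
      have htt : trigonThird f i j = j := by
        rw [trigonThird, if_neg]
        rintro (h' | h')
        · rw [hfi] at h'; exact d12 h'
        · rw [hfi1] at h'; exact d10 h'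
      rw [htt] at hA
      have hC1 := crosses_corner h2n f i (hfree i) hni (by rw [hfi1]; exact d3.symm) (hfree (i + 1)) (by rw [hfi1, hfi]; exact d14)
      rw [hfi, hfi1] at hC1
      rw [hj1, hk1] at hC1
      have hs1 : Crosses f (k + 1) j ↔ Crosses f i j := by
        have hs := crosses_swap_fst hinv (hfree i) d2.symm (by rw [hfi]; exact d12) (by rw [hfj]; exact d4.symm) (by rw [hfj, hfi]; exact d15)
        rw [hfi] at hs; exact hs
      have hs3a := crosses_snd hinv (k + 1) j
      rw [hfj] at hs3a
      have hcora := crosses_corner' h2n f k (hfree k) (by rw [hfk]; exact d12) (by rw [hfk1]; exact d4) (hfree (k + 1)) (by rw [hfk1, hfk]; exact d2)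
      rw [hfk, hfk1] at hcora
      have hC2 := hs1.symm.trans (hs3a.symm.trans hcora)
      have hs2 : Crosses f (j + 1) j ↔ Crosses f (i + 1) j := by
        have hs := crosses_swap_fst hinv (hfree (i + 1)) d6.symm (by rw [hfi1]; exact d10) (by rw [hfj]; exact d8.symm) (by rw [hfj, hfi1]; exact d13.symm)
        rw [hfi1] at hs; exact hs
      have hcorb := crosses_corner' h2n f j (hfree j) (by rw [hfj]; exact d13.symm) (by rw [hfj1]; exact d6) (hfree (j + 1)) (by rw [hfj1, hfj]; exact d8)
      rw [hfj, hfj1] at hcorb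
      have hC3 := hs2.symm.trans hcorb
      rcases (by omega : (j - i).val + 2 ≤ (k - i).val ∨ (k - i).val + 2 ≤ (j - i).val) with hO | hO
      · have eJK : (j - k).val = (j - i).val + 2*n - (k - i).val := by rw [shift_lt (o := i) (by omega)]
        have eIK : (i - k).val = 0 + 2*n - (k - i).val := by rw [shift_lt (o := i) (by rw [hi0]; omega), hi0]
        have eKJ : (k - j).val = (k - i).val - (j - i).val := by rw [shift_le (o := i) (by omega)]
        have eI1J : (i + 1 - j).val = 1 + 2*n - (j - i).val := by rw [shift_lt (o := i) (by rw [h1v]; omega), h1v]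
        rw [eJK, eIK] at hC2
        rw [eKJ, eI1J] at hC3
        rw [hC1, hC2, hC3] at hA
        exfalso; unfold ExactlyTwo at hA; omega
      · have eIJ : (i - j).val = 0 + 2*n - (j - i).val := by rw [shift_lt (o := i) (by rw [hi0]; omega), hi0]
        have eKJ : (k - j).val = (k - i).val + 2*n - (j - i).val := by rw [shift_lt (o := i) (by omega)]
        exact core_lemma hn3 f hinv j i k hfj hfj1 hfi (by rw [eIJ]; omega) (by rw [eIJ, eKJ]; omega) (by rw [eKJ]; omega)
    · exfalso
      have hfk : f k = i + 1 := by rw [← h]; exact hinv (i + 1)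
      have hmj := hf6 j (by simp [trigonSet])
      rcases hmj with h' | h' | h' | h' | h' | h'
      · have hh := congrArg f h'; rw [hinv j, hfi] at hh; exact d12 hh
      · have hh := congrArg f h'; rw [hinv j, h] at hh; exact d11 hh
      · exact absurd h' (hfree j)
      · exact absurd h' hnj
      · have hh := congrArg f h'; rw [hinv j, hfk] at hh; exact d6 hh.symm
      · have hh := congrArg f h'; rw [hinv j, hfk1] at hh; exact d2 hh.symm
    · exfalso; have hh := congrArg f h; rw [hinv (i + 1), hfk1] at hh; exact d1 hh.symm

end SphericalCurveReductivity
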